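/- Let n ≥ 1, N ≥ 0, and let λ be a nonzero polynomial in n complex variables with homogeneous decomposition λ = Σ_{l ≥ l₀} λ_l, where λ_{l₀} ≠ 0 is the lowest-degree nonzero homogeneous component. Define the linear endomorphism Λ_N of 𝒫_N by letting Λ_N(p) be the truncation of the product λ·p to degree at most N (i.e., all monomials of total degree greater than N are discarded). Then the codimension of the range of Λ_N in 𝒫_N is equal to the dimension of the space of λ_{l₀}-harmonic polynomials of degree at most N, i.e., of the space {p ∈ 𝒫_N : λ_{l₀}(D)p = 0}. -/

import Mathlib

set_option maxHeartbeats 1000000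
set_option synthInstance.maxHeartbeats 400000


open MvPolynomial

/-- The iterated partial derivative `∂^α = ∏ⱼ ∂ⱼ^{α j}` acting on polynomials in `n`
variables over `ℂ`. -/
noncomputable def pderivPow {n : ℕ} (α : Fin n →₀ ℕ) :
    Module.End ℂ (MvPolynomial (Fin n) ℂ) :=
  ((List.finRange n).map fun j =>
    ((MvPolynomial.pderiv j).toLinearMap : Module.End ℂ (MvPolynomial (Fin n) ℂ)) ^ (α j)).prod

/-- For a polynomial `Q = ∑_α c_α x^α`, the constant-coefficient differential operator
`Q(D) = ∑_α c_α D^α`, where `D_j = -i ∂/∂x_j`. -/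
noncomputable def QD {n : ℕ} (Q : MvPolynomial (Fin n) ℂ) :
    Module.End ℂ (MvPolynomial (Fin n) ℂ) :=
  ∑ α ∈ Q.support, (Q.coeff α * (-Complex.I) ^ (α.sum fun _ k => k)) • pderivPow α

namespace Aux

variable {n : ℕ}

local notation "P" => MvPolynomial (Fin n) ℂ

lemma pderiv_pow_monomial (j : Fin n) (k : ℕ) (β : Fin n →₀ ℕ) (d : ℂ) :
    (((MvPolynomial.pderiv j).toLinearMap : Module.End ℂ P) ^ k) (monomial β d) =
      monomial (β - Finsupp.single j k) (d * ((β j).descFactorial k)) := by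
  induction k with
  | zero => simp
  | succ k ih =>
    rw [pow_succ', Module.End.mul_apply, ih]
    simp only [Derivation.coeFn_coe]
    rw [pderiv_monomial]
    have h1 : β - Finsupp.single j k - Finsupp.single j 1 = β - Finsupp.single j (k + 1) := by
      rw [tsub_tsub, ← Finsupp.single_add]
    have h2 : (β - Finsupp.single j k) j = β j - k := by
      rw [Finsupp.tsub_apply, Finsupp.single_eq_same]
    have h3 : ((β j).descFactorial k : ℂ) * ((β j - k : ℕ) : ℂ)
        = ((β j).descFactorial (k+1) : ℂ) := by
      rw [← Nat.cast_mul, Nat.descFactorial_succ, Nat.mul_comm]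
    rw [h1, h2, mul_assoc, h3]

end Aux

namespace Aux2
open Aux Finsupp

variable {n : ℕ}

local notation "P" => MvPolynomial (Fin n) ℂ

lemma list_prod_pderiv (α β : Fin n →₀ ℕ) (d : ℂ) :
    ∀ (L : List (Fin n)), L.Nodup →
    ((L.map fun j => ((MvPolynomial.pderiv j).toLinearMap : Module.End ℂ P) ^ (α j)).prod)
        (monomial β d) =
      monomial (β - ∑ j ∈ L.toFinset, Finsupp.single j (α j))
        (d * ∏ j ∈ L.toFinset, ((β j).descFactorial (α j))) := by
  intro L
  induction L with
  | nil => simp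
  | cons j L ih =>
    intro hnd
    have hj : j ∉ L := (List.nodup_cons.mp hnd).1
    have hnd' : L.Nodup := (List.nodup_cons.mp hnd).2
    rw [List.map_cons, List.prod_cons, Module.End.mul_apply, ih hnd', pderiv_pow_monomial]
    have hjt : j ∉ L.toFinset := by simpa using hj
    have hs : (β - ∑ i ∈ L.toFinset, Finsupp.single i (α i)) j = β j := by
      rw [Finsupp.tsub_apply]
      have : (∑ i ∈ L.toFinset, Finsupp.single i (α i)) j = 0 := by
        rw [Finsupp.finset_sum_apply]
        exact Finset.sum_eq_zero fun i hi => by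
          rw [Finsupp.single_eq_of_ne]; rintro rfl; exact hjt hi
      rw [this, Nat.sub_zero]
    rw [hs, List.toFinset_cons, Finset.sum_insert hjt, Finset.prod_insert hjt]
    rw [tsub_tsub, add_comm (∑ i ∈ L.toFinset, Finsupp.single i (α i))]
    push_cast
    ring

lemma pderivPow_monomial (α β : Fin n →₀ ℕ) (d : ℂ) :
    pderivPow α (monomial β d) =
      monomial (β - α) (d * ∏ j, ((β j).descFactorial (α j))) := by
  have := list_prod_pderiv (n := n) α β d (List.finRange n) (List.nodup_finRange n)
  rw [pderivPow, this, List.toFinset_finRange]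
  congr 1
  · rw [Finsupp.univ_sum_single]

end Aux2

namespace Aux3
open Aux Aux2

variable {n : ℕ}

local notation "P" => MvPolynomial (Fin n) ℂ

/-- `Q(∂)` without the `(-i)` factors. -/
noncomputable def PD (Q : P) : Module.End ℂ P :=
  ∑ α ∈ Q.support, Q.coeff α • pderivPow α

lemma PD_eq_sum_of_subset (Q : P) (s : Finset (Fin n →₀ ℕ)) (hs : Q.support ⊆ s) :
    PD Q = ∑ α ∈ s, Q.coeff α • pderivPow α := by
  rw [PD]
  exact Finset.sum_subset hs (fun α _ hα => by
    rw [MvPolynomial.notMem_support_iff.mp hα, zero_smul])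

lemma PD_add (Q R : P) : PD (Q + R) = PD Q + PD R := by
  classical
  set s := Q.support ∪ R.support ∪ (Q + R).support with hs
  rw [PD_eq_sum_of_subset Q s (fun x hx => Finset.mem_union_left _ (Finset.mem_union_left _ hx)),
    PD_eq_sum_of_subset R s (fun x hx => Finset.mem_union_left _ (Finset.mem_union_right _ hx)),
    PD_eq_sum_of_subset (Q + R) s (fun x hx => Finset.mem_union_right _ hx),
    ← Finset.sum_add_distrib]
  refine Finset.sum_congr rfl fun α _ => ?_
  rw [MvPolynomial.coeff_add, add_smul]

lemma PD_smul (c : ℂ) (Q : P) : PD (c • Q) = c • PD Q := by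
  classical
  rw [PD_eq_sum_of_subset (c • Q) Q.support (by
      intro x hx
      rw [MvPolynomial.mem_support_iff] at hx ⊢
      intro h; apply hx; rw [MvPolynomial.coeff_smul, h, smul_zero]), PD, Finset.smul_sum]
  refine Finset.sum_congr rfl fun α _ => ?_
  rw [MvPolynomial.coeff_smul, smul_smul, smul_eq_mul]

lemma PD_monomial (α : Fin n →₀ ℕ) (c : ℂ) :
    PD (monomial α c) = c • pderivPow α := by
  by_cases hc : c = 0
  · subst hc
    rw [PD]
    simp
  · rw [PD_eq_sum_of_subset _ {α} (MvPolynomial.support_monomial_subset), Finset.sum_singleton,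
      MvPolynomial.coeff_monomial, if_pos rfl]

end Aux3

namespace Aux4
open Aux Aux2 Aux3

variable {n : ℕ}

local notation "P" => MvPolynomial (Fin n) ℂ

/-- Fischer-type pairing `B(p, q) = (p(∂) q)(0) = ∑_α α! p_α q_α`. -/
noncomputable def Bil : P →ₗ[ℂ] P →ₗ[ℂ] ℂ :=
  LinearMap.mk₂ ℂ (fun p q => MvPolynomial.coeff 0 (PD p q))
    (fun p p' q => by simp only [PD_add, LinearMap.add_apply, MvPolynomial.coeff_add])
    (fun c p q => by simp only [PD_smul, LinearMap.smul_apply, MvPolynomial.coeff_smul,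
      smul_eq_mul])
    (fun p q q' => by simp only [map_add, MvPolynomial.coeff_add])
    (fun c p q => by simp only [map_smul, MvPolynomial.coeff_smul, smul_eq_mul])

lemma Bil_apply (p q : P) : Bil p q = MvPolynomial.coeff 0 (PD p q) := rfl

lemma Bil_monomial (α β : Fin n →₀ ℕ) (a b : ℂ) :
    Bil (monomial α a) (monomial β b) =
      if β = α then a * b * ∏ j, ((β j).factorial : ℂ) else 0 := by
  rw [Bil_apply, PD_monomial, LinearMap.smul_apply, pderivPow_monomial,
    MvPolynomial.coeff_smul, MvPolynomial.coeff_monomial, smul_eq_mul]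
  by_cases h : β = α
  · subst h
    rw [if_pos (tsub_self β), if_pos rfl]
    have : ∀ j : Fin n, (β j).descFactorial (β j) = (β j).factorial := fun j =>
      Nat.descFactorial_self (β j)
    rw [Finset.prod_congr rfl fun j _ => this j]
    push_cast
    ring
  · rw [if_neg h]
    by_cases hle : β ≤ α
    · rw [if_pos (tsub_eq_zero_iff_le.mpr hle)]
      obtain ⟨j, hj⟩ : ∃ j, β j < α j := by
        by_contra hc
        push_neg at hc
        exact h (le_antisymm hle (Finsupp.le_def.mpr hc))
      have : ∏ j, (β j).descFactorial (α j) = 0 :=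
        Finset.prod_eq_zero (Finset.mem_univ j) (Nat.descFactorial_eq_zero_iff_lt.mpr hj)
      rw [this]
      push_cast
      ring
    · rw [if_neg (fun h0 => hle (tsub_eq_zero_iff_le.mp h0)), mul_zero]

lemma Bil_apply_monomial (p : P) (β : Fin n →₀ ℕ) (b : ℂ) :
    Bil p (monomial β b) = MvPolynomial.coeff β p * b * ∏ j, ((β j).factorial : ℂ) := by
  conv_lhs => rw [p.as_sum, map_sum, LinearMap.sum_apply]
  rw [Finset.sum_congr rfl (fun α _ => Bil_monomial α β (MvPolynomial.coeff α p) b)]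
  rw [Finset.sum_ite_eq p.support β
    (fun α => MvPolynomial.coeff α p * b * ∏ j, ((β j).factorial : ℂ))]
  by_cases h : β ∈ p.support
  · rw [if_pos h]
  · rw [if_neg h, MvPolynomial.notMem_support_iff.mp h]
    ring

end Aux4

namespace Aux5
open Aux Aux2 Aux3 Aux4

variable {n : ℕ}

local notation "P" => MvPolynomial (Fin n) ℂ

lemma adjoint_mono (α β γ : Fin n →₀ ℕ) (a b c : ℂ) :
    Bil (PD (monomial α a) (monomial β b)) (monomial γ c) =
      Bil (monomial β b) ((monomial α a) * (monomial γ c)) := by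
  rw [PD_monomial, LinearMap.smul_apply, pderivPow_monomial, map_smul, LinearMap.smul_apply,
    smul_eq_mul, Bil_monomial, MvPolynomial.monomial_mul, Bil_monomial]
  by_cases hle : α ≤ β
  · have hiff : (γ = β - α) ↔ (α + γ = β) := by
      constructor
      · rintro rfl
        ext j
        have := Finsupp.le_def.mp hle j
        simp only [Finsupp.add_apply, Finsupp.tsub_apply]
        omega
      · intro h
        ext j
        have := congrArg (fun f : Fin n →₀ ℕ => f j) h
        simp only [Finsupp.add_apply] at this
        simp only [Finsupp.tsub_apply]
        omega
    by_cases h : γ = β - α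
    · rw [if_pos h, if_pos (hiff.mp h)]
      subst h
      rw [show α + (β - α) = β from hiff.mp rfl]
      have key : ∀ j : Fin n, ((β j).descFactorial (α j)) * ((β - α) j).factorial
          = (β j).factorial := by
        intro j
        rw [Finsupp.tsub_apply, mul_comm]
        exact Nat.factorial_mul_descFactorial (Finsupp.le_def.mp hle j)
      calc a * (b * ↑(∏ j, (β j).descFactorial (α j)) * c * ∏ j, (((β - α) j).factorial : ℂ))
          = a * b * c * ((∏ j, ((β j).descFactorial (α j) : ℂ)) *
              ∏ j, (((β - α) j).factorial : ℂ)) := by push_cast; ring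
        _ = a * b * c * ∏ j, (((β j).descFactorial (α j) : ℂ) * (((β - α) j).factorial : ℂ)) := by
              rw [← Finset.prod_mul_distrib]
        _ = a * b * c * ∏ j, ((β j).factorial : ℂ) := by
              congr 1
              refine Finset.prod_congr rfl fun j _ => ?_
              rw [← Nat.cast_mul, key j]
        _ = b * (a * c) * ∏ j, ((β j).factorial : ℂ) := by ring
    · rw [if_neg h, if_neg (fun hc => h (hiff.mpr hc)), mul_zero]
  · obtain ⟨j, hj⟩ : ∃ j, β j < α j := by
      by_contra hc
      push_neg at hc
      exact hle (Finsupp.le_def.mpr hc)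
    have hz : ∏ j, ((β j).descFactorial (α j)) = 0 :=
      Finset.prod_eq_zero (Finset.mem_univ j) (Nat.descFactorial_eq_zero_iff_lt.mpr hj)
    have hne : ¬(α + γ = β) := by
      intro hc
      apply hle
      rw [← hc]
      exact Finsupp.le_def.mpr fun i => by simp
    rw [if_neg hne, hz]
    split_ifs <;> push_cast <;> ring

lemma adjoint (q p w : P) : Bil (PD q p) w = Bil p (q * w) := by
  induction q using MvPolynomial.induction_on' with
  | add q₁ q₂ ih₁ ih₂ =>
    rw [PD_add, LinearMap.add_apply, map_add, LinearMap.add_apply, ih₁, ih₂, add_mul, map_add]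
  | monomial α a =>
    induction p using MvPolynomial.induction_on' with
    | add p₁ p₂ ih₁ ih₂ => rw [map_add, map_add, LinearMap.add_apply, ih₁, ih₂, map_add,
        LinearMap.add_apply]
    | monomial β b =>
      induction w using MvPolynomial.induction_on' with
      | add w₁ w₂ ih₁ ih₂ => rw [map_add, mul_add, map_add, ih₁, ih₂]
      | monomial γ c => exact adjoint_mono α β γ a b c

end Aux5

namespace Aux6
open Aux Aux2 Aux3 Aux4 Aux5

variable {n : ℕ}

local notation "P" => MvPolynomial (Fin n) ℂ

lemma degree_eq_sum_univ (f : Fin n →₀ ℕ) : f.degree = ∑ j, f j :=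
  Finset.sum_subset (Finset.subset_univ _)
    (fun x _ hx => Finsupp.notMem_support_iff.mp hx)

lemma degree_mono {f g : Fin n →₀ ℕ} (h : f ≤ g) : f.degree ≤ g.degree := by
  rw [degree_eq_sum_univ, degree_eq_sum_univ]
  exact Finset.sum_le_sum fun j _ => Finsupp.le_def.mp h j

lemma degree_add (f g : Fin n →₀ ℕ) : (f + g).degree = f.degree + g.degree := by
  simp only [degree_eq_sum_univ, Finsupp.add_apply, Finset.sum_add_distrib]

lemma sum_eq_degree (f : Fin n →₀ ℕ) : (f.sum fun _ e => e) = f.degree := rfl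

lemma mem_RTD_monomial {e : Fin n →₀ ℕ} {c : ℂ} {m : ℕ} (h : e.degree ≤ m) :
    monomial e c ∈ restrictTotalDegree (Fin n) ℂ m := by
  rw [mem_restrictTotalDegree]
  exact le_trans (totalDegree_monomial_le e c) h

lemma degree_le_of_mem_support {p : P} {β : Fin n →₀ ℕ} (h : β ∈ p.support) :
    β.degree ≤ p.totalDegree := by
  rw [← sum_eq_degree]
  exact le_totalDegree h

lemma pderivPow_monomial_mem {α β : Fin n →₀ ℕ} {d : ℂ} {m : ℕ}
    (h : β.degree ≤ m + α.degree) :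
    pderivPow α (monomial β d) ∈ restrictTotalDegree (Fin n) ℂ m := by
  rw [pderivPow_monomial]
  by_cases hle : α ≤ β
  · apply mem_RTD_monomial
    have : (β - α).degree + α.degree = β.degree := by
      rw [← degree_add, tsub_add_cancel_of_le hle]
    omega
  · obtain ⟨j, hj⟩ : ∃ j, β j < α j := by
      by_contra hc
      push_neg at hc
      exact hle (Finsupp.le_def.mpr hc)
    have hz : ∏ j, ((β j).descFactorial (α j)) = 0 :=
      Finset.prod_eq_zero (Finset.mem_univ j) (Nat.descFactorial_eq_zero_iff_lt.mpr hj)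
    rw [hz, Nat.cast_zero, mul_zero, map_zero]
    exact Submodule.zero_mem _

lemma pderivPow_mem {α : Fin n →₀ ℕ} {p : P} {m : ℕ}
    (h : p.totalDegree ≤ m + α.degree) :
    pderivPow α p ∈ restrictTotalDegree (Fin n) ℂ m := by
  have hrw : pderivPow α p
      = ∑ β ∈ p.support, pderivPow α (monomial β (MvPolynomial.coeff β p)) := by
    conv_lhs => rw [p.as_sum]
    rw [map_sum]
  rw [hrw]
  exact Submodule.sum_mem _ fun β hβ =>
    pderivPow_monomial_mem (le_trans (degree_le_of_mem_support hβ) h)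

lemma pderivPow_monomial_zero {α β : Fin n →₀ ℕ} {d : ℂ} (h : β.degree < α.degree) :
    pderivPow α (monomial β d) = 0 := by
  rw [pderivPow_monomial]
  obtain ⟨j, hj⟩ : ∃ j, β j < α j := by
    by_contra hc
    push_neg at hc
    exact absurd (degree_mono (Finsupp.le_def.mpr hc)) (by omega)
  have hz : ∏ j, ((β j).descFactorial (α j)) = 0 :=
    Finset.prod_eq_zero (Finset.mem_univ j) (Nat.descFactorial_eq_zero_iff_lt.mpr hj)
  rw [hz, Nat.cast_zero, mul_zero, map_zero]

lemma pderivPow_zero {α : Fin n →₀ ℕ} {p : P} (h : p.totalDegree < α.degree) :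
    pderivPow α p = 0 := by
  have hrw : pderivPow α p
      = ∑ β ∈ p.support, pderivPow α (monomial β (MvPolynomial.coeff β p)) := by
    conv_lhs => rw [p.as_sum]
    rw [map_sum]
  rw [hrw]
  exact Finset.sum_eq_zero fun β hβ =>
    pderivPow_monomial_zero (lt_of_le_of_lt (degree_le_of_mem_support hβ) h)

lemma degree_of_mem_support_homog {q : P} {l₀ : ℕ} (hq : q.IsHomogeneous l₀)
    {α : Fin n →₀ ℕ} (hα : α ∈ q.support) : α.degree = l₀ := by
  have := hq (MvPolynomial.mem_support_iff.mp hα)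
  rw [Finsupp.degree_eq_weight_one]
  exact this

end Aux6

namespace Aux7
open Aux Aux2 Aux3 Aux4 Aux5 Aux6

variable {n : ℕ}

local notation "P" => MvPolynomial (Fin n) ℂ

lemma QD_eq_smul_PD {q : P} {l₀ : ℕ} (hq : q.IsHomogeneous l₀) :
    QD q = ((-Complex.I) ^ l₀ : ℂ) • PD q := by
  rw [QD, PD, Finset.smul_sum]
  refine Finset.sum_congr rfl fun α hα => ?_
  rw [smul_smul]
  congr 1
  rw [sum_eq_degree, degree_of_mem_support_homog hq hα, mul_comm]

lemma ker_QD_eq {q : P} {l₀ : ℕ} (hq : q.IsHomogeneous l₀) :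
    LinearMap.ker (QD q) = LinearMap.ker (PD q) := by
  rw [QD_eq_smul_PD hq]
  exact LinearMap.ker_smul _ _ (pow_ne_zero _ (neg_ne_zero.mpr Complex.I_ne_zero))

lemma PD_mem {q : P} {l₀ : ℕ} (hq : q.IsHomogeneous l₀) {p : P} {N : ℕ} (hl : l₀ ≤ N)
    (hp : p ∈ restrictTotalDegree (Fin n) ℂ N) :
    PD q p ∈ restrictTotalDegree (Fin n) ℂ (N - l₀) := by
  rw [PD, LinearMap.sum_apply]
  refine Submodule.sum_mem _ fun α hα => ?_
  rw [LinearMap.smul_apply]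
  refine Submodule.smul_mem _ _ (pderivPow_mem ?_)
  rw [degree_of_mem_support_homog hq hα]
  rw [mem_restrictTotalDegree] at hp
  omega

lemma PD_zero_of_lt {q : P} {l₀ : ℕ} (hq : q.IsHomogeneous l₀) {p : P} {N : ℕ} (hl : N < l₀)
    (hp : p ∈ restrictTotalDegree (Fin n) ℂ N) :
    PD q p = 0 := by
  rw [PD, LinearMap.sum_apply]
  refine Finset.sum_eq_zero fun α hα => ?_
  rw [LinearMap.smul_apply, pderivPow_zero, smul_zero]
  rw [degree_of_mem_support_homog hq hα]
  rw [mem_restrictTotalDegree] at hp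
  omega

lemma mul_mem_RTD {q : P} {l₀ : ℕ} (hq : q.IsHomogeneous l₀) {w : P} {N : ℕ} (hl : l₀ ≤ N)
    (hw : w ∈ restrictTotalDegree (Fin n) ℂ (N - l₀)) :
    q * w ∈ restrictTotalDegree (Fin n) ℂ N := by
  rw [mem_restrictTotalDegree] at hw ⊢
  calc (q * w).totalDegree ≤ q.totalDegree + w.totalDegree := totalDegree_mul q w
    _ ≤ l₀ + (N - l₀) := add_le_add hq.totalDegree_le hw
    _ ≤ N := by omega

end Aux7

namespace Aux8
open Aux6

variable {n : ℕ}

local notation "P" => MvPolynomial (Fin n) ℂ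

open MvPolynomial

lemma hc_monomial (k : ℕ) (δ : Fin n →₀ ℕ) (u : ℂ) :
    homogeneousComponent k (monomial δ u) =
      if δ.degree = k then monomial δ u else 0 := by
  ext d
  rw [coeff_homogeneousComponent]
  by_cases h : δ = d
  · subst h
    split_ifs <;> simp_all
  · rw [coeff_monomial, if_neg h]
    split_ifs <;> simp [coeff_monomial, if_neg h]

lemma hc_mul (a b : P) (k : ℕ) :
    homogeneousComponent k (a * b) =
      ∑ i ∈ Finset.range (k + 1),
        homogeneousComponent i a * homogeneousComponent (k - i) b := by
  induction a using MvPolynomial.induction_on' with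
  | add a₁ a₂ ih₁ ih₂ =>
    rw [add_mul, map_add, ih₁, ih₂, ← Finset.sum_add_distrib]
    refine Finset.sum_congr rfl fun i _ => ?_
    rw [map_add, add_mul]
  | monomial α u =>
    induction b using MvPolynomial.induction_on' with
    | add b₁ b₂ ih₁ ih₂ =>
      rw [mul_add, map_add, ih₁, ih₂, ← Finset.sum_add_distrib]
      refine Finset.sum_congr rfl fun i _ => ?_
      rw [map_add, mul_add]
    | monomial β v =>
      rw [monomial_mul, hc_monomial]
      have hterm : ∀ i ∈ Finset.range (k + 1),
          homogeneousComponent i (monomial α u) * homogeneousComponent (k - i) (monomial β v)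
          = if α.degree = i then
              (if β.degree = k - i then monomial α u * monomial β v else 0) else 0 := by
        intro i _
        rw [hc_monomial, hc_monomial]
        split_ifs <;> simp
      rw [Finset.sum_congr rfl hterm, Finset.sum_ite_eq]
      rw [degree_add]
      by_cases hk : α.degree + β.degree = k
      · rw [if_pos hk, if_pos (by simp; omega), if_pos (by omega), monomial_mul]
      · rw [if_neg hk]
        by_cases h1 : α.degree ∈ Finset.range (k + 1)
        · rw [if_pos h1, if_neg (by simp at h1; omega)]
        · rw [if_neg h1]

end Aux8

namespace Aux9
open Aux6 Aux8

variable {n : ℕ} {N l₀ : ℕ} {lam : MvPolynomial (Fin n) ℂ}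
  {Λ : MvPolynomial (Fin n) ℂ →ₗ[ℂ] MvPolynomial (Fin n) ℂ}

local notation "P" => MvPolynomial (Fin n) ℂ

lemma hc_hc (k l : ℕ) (x : P) :
    homogeneousComponent k (homogeneousComponent l x)
      = if k = l then homogeneousComponent l x else 0 :=
  homogeneousComponent_of_mem (homogeneousComponent_mem l x)

lemma hclam (hmin : ∀ l < l₀, homogeneousComponent l lam = 0)
    (p : P) (k : ℕ) (hp : ∀ j, j + l₀ ≤ k → homogeneousComponent j p = 0) :
    homogeneousComponent k (lam * p) = 0 := by
  rw [hc_mul]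
  refine Finset.sum_eq_zero fun i hi => ?_
  rw [Finset.mem_range] at hi
  by_cases hil : i < l₀
  · rw [hmin i hil, zero_mul]
  · rw [hp (k - i) (by omega), mul_zero]

lemma Λ_zero (hmin : ∀ l < l₀, homogeneousComponent l lam = 0)
    (hΛ : ∀ p : P, Λ p = ∑ l ∈ Finset.range (N + 1), homogeneousComponent l (lam * p))
    (p : P) (hp : ∀ j, j + l₀ ≤ N → homogeneousComponent j p = 0) : Λ p = 0 := by
  rw [hΛ]
  refine Finset.sum_eq_zero fun k hk => ?_
  rw [Finset.mem_range] at hk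
  exact hclam hmin p k fun j hj => hp j (by omega)

lemma Λ_mem
    (hΛ : ∀ p : P, Λ p = ∑ l ∈ Finset.range (N + 1), homogeneousComponent l (lam * p))
    (p : P) : Λ p ∈ restrictTotalDegree (Fin n) ℂ N := by
  rw [hΛ]
  refine Submodule.sum_mem _ fun l hl => ?_
  rw [Finset.mem_range] at hl
  rw [mem_restrictTotalDegree]
  exact le_trans (homogeneousComponent_isHomogeneous l _).totalDegree_le (by omega)

lemma hc_Λ
    (hΛ : ∀ p : P, Λ p = ∑ l ∈ Finset.range (N + 1), homogeneousComponent l (lam * p))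
    (p : P) (k : ℕ) (hk : k ≤ N) :
    homogeneousComponent k (Λ p) = homogeneousComponent k (lam * p) := by
  rw [hΛ, map_sum]
  rw [Finset.sum_congr rfl fun l _ => hc_hc k l (lam * p), Finset.sum_ite_eq]
  rw [if_pos (Finset.mem_range.mpr (by omega))]

lemma Λ_inj_on_W (hl : l₀ ≤ N)
    (hl₀ : homogeneousComponent l₀ lam ≠ 0)
    (hmin : ∀ l < l₀, homogeneousComponent l lam = 0)
    (hΛ : ∀ p : P, Λ p = ∑ l ∈ Finset.range (N + 1), homogeneousComponent l (lam * p))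
    (p : P) (hp : p ∈ restrictTotalDegree (Fin n) ℂ (N - l₀)) (hΛp : Λ p = 0) : p = 0 := by
  by_contra hne
  have hex : ∃ l, homogeneousComponent l p ≠ 0 := by
    by_contra hc
    push_neg at hc
    apply hne
    rw [← sum_homogeneousComponent p]
    exact Finset.sum_eq_zero fun i _ => hc i
  set m := Nat.find hex with hm_def
  have hm : homogeneousComponent m p ≠ 0 := Nat.find_spec hex
  have hmin' : ∀ j < m, homogeneousComponent j p = 0 := fun j hj => by
    have := Nat.find_min hex hj
    simpa using this
  have hmle : m ≤ p.totalDegree := by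
    by_contra hgt
    exact hm (homogeneousComponent_eq_zero m p (by omega))
  have hmN : m + l₀ ≤ N := by
    rw [mem_restrictTotalDegree] at hp
    omega
  have h0 : homogeneousComponent (m + l₀) (lam * p) = 0 := by
    rw [← hc_Λ hΛ p _ hmN, hΛp, map_zero]
  rw [hc_mul] at h0
  have hcollapse : ∑ i ∈ Finset.range (m + l₀ + 1),
      homogeneousComponent i lam * homogeneousComponent (m + l₀ - i) p
      = homogeneousComponent l₀ lam * homogeneousComponent (m + l₀ - l₀) p := by
    refine Finset.sum_eq_single_of_mem l₀ (Finset.mem_range.mpr (by omega)) ?_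
    intro i hi hne'
    rw [Finset.mem_range] at hi
    by_cases hil : i < l₀
    · rw [hmin i hil, zero_mul]
    · rw [hmin' (m + l₀ - i) (by omega), mul_zero]
  rw [hcollapse, show m + l₀ - l₀ = m from by omega] at h0
  exact mul_ne_zero hl₀ hm h0

end Aux9

namespace Aux10
open Aux6 Aux8 Aux9

variable {n : ℕ} {N l₀ : ℕ} {lam : MvPolynomial (Fin n) ℂ}
  {Λ : MvPolynomial (Fin n) ℂ →ₗ[ℂ] MvPolynomial (Fin n) ℂ}

local notation "P" => MvPolynomial (Fin n) ℂ

lemma RTD_mono {a b : ℕ} (h : a ≤ b) :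
    restrictTotalDegree (Fin n) ℂ a ≤ restrictTotalDegree (Fin n) ℂ b := fun p hp => by
  rw [mem_restrictTotalDegree] at hp ⊢
  omega

lemma map_Λ_eq (hl : l₀ ≤ N)
    (hmin : ∀ l < l₀, homogeneousComponent l lam = 0)
    (hΛ : ∀ p : P, Λ p = ∑ l ∈ Finset.range (N + 1), homogeneousComponent l (lam * p)) :
    Submodule.map Λ (restrictTotalDegree (Fin n) ℂ N)
      = Submodule.map Λ (restrictTotalDegree (Fin n) ℂ (N - l₀)) := by
  refine le_antisymm ?_ (Submodule.map_mono (RTD_mono (by omega)))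
  rintro - ⟨p, hp, rfl⟩
  set t : P := ∑ l ∈ Finset.range (N - l₀ + 1), homogeneousComponent l p with ht
  have htW : t ∈ restrictTotalDegree (Fin n) ℂ (N - l₀) := by
    refine Submodule.sum_mem _ fun l hl' => ?_
    rw [Finset.mem_range] at hl'
    rw [mem_restrictTotalDegree]
    exact le_trans (homogeneousComponent_isHomogeneous l _).totalDegree_le (by omega)
  have hsub : Λ (p - t) = 0 := by
    refine Λ_zero hmin hΛ _ fun j hj => ?_
    rw [map_sub]
    have hct : homogeneousComponent j t = homogeneousComponent j p := by
      rw [ht, map_sum, Finset.sum_congr rfl fun l _ => hc_hc j l p, Finset.sum_ite_eq,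
        if_pos (Finset.mem_range.mpr (by omega))]
    rw [hct, sub_self]
  have : Λ p = Λ t := by
    rw [map_sub] at hsub
    exact sub_eq_zero.mp hsub
  rw [this]
  exact Submodule.mem_map_of_mem htW

end Aux10

namespace Aux11
open Aux Aux2 Aux3 Aux4 Aux5 Aux6 Aux7 Aux8 Aux9 Aux10 Module

variable {n : ℕ} {N l₀ : ℕ} {lam : MvPolynomial (Fin n) ℂ}
  {Λ : MvPolynomial (Fin n) ℂ →ₗ[ℂ] MvPolynomial (Fin n) ℂ}

local notation "P" => MvPolynomial (Fin n) ℂ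

lemma lhs_dim (hl : l₀ ≤ N)
    (hl₀ : homogeneousComponent l₀ lam ≠ 0)
    (hmin : ∀ l < l₀, homogeneousComponent l lam = 0)
    (hΛ : ∀ p : P, Λ p = ∑ l ∈ Finset.range (N + 1), homogeneousComponent l (lam * p)) :
    Module.finrank ℂ
      (↥(restrictTotalDegree (Fin n) ℂ N) ⧸
        (Submodule.map Λ (restrictTotalDegree (Fin n) ℂ N)).comap
          (restrictTotalDegree (Fin n) ℂ N).subtype)
    = finrank ℂ (restrictTotalDegree (Fin n) ℂ N)
        - finrank ℂ (restrictTotalDegree (Fin n) ℂ (N - l₀)) := by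
  set V := restrictTotalDegree (Fin n) ℂ N
  set W := restrictTotalDegree (Fin n) ℂ (N - l₀)
  have hle : Submodule.map Λ V ≤ V := by
    rintro - ⟨p, hp, rfl⟩
    exact Λ_mem hΛ p
  -- finrank of the comap equals finrank of map Λ V
  have e1 := Submodule.comapSubtypeEquivOfLe hle
  have h1 : finrank ℂ ((Submodule.map Λ V).comap V.subtype) = finrank ℂ (Submodule.map Λ V) :=
    e1.finrank_eq
  -- finrank of map Λ V = finrank W
  have hmapW : Submodule.map Λ V = Submodule.map Λ W := map_Λ_eq hl hmin hΛ
  have hinj : Function.Injective (Λ ∘ₗ W.subtype) := by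
    rw [← LinearMap.ker_eq_bot, eq_bot_iff]
    rintro w hw
    simp only [LinearMap.mem_ker, LinearMap.comp_apply] at hw
    have := Λ_inj_on_W hl hl₀ hmin hΛ (w : P) w.2 hw
    simpa [Submodule.mem_bot] using Subtype.ext this
  have hr : LinearMap.range (Λ ∘ₗ W.subtype) = Submodule.map Λ W := by
    rw [LinearMap.range_comp, Submodule.range_subtype]
  have h2 : finrank ℂ (Submodule.map Λ V) = finrank ℂ W := by
    rw [hmapW, ← hr, LinearMap.finrank_range_of_inj hinj]
  have h3 := Submodule.finrank_quotient_add_finrank ((Submodule.map Λ V).comap V.subtype)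
  omega

lemma rhs_dim (hl : l₀ ≤ N)
    (hl₀ : homogeneousComponent l₀ lam ≠ 0) :
    finrank ℂ
      ↥(restrictTotalDegree (Fin n) ℂ N ⊓
        LinearMap.ker (QD (homogeneousComponent l₀ lam)))
    = finrank ℂ (restrictTotalDegree (Fin n) ℂ N)
        - finrank ℂ (restrictTotalDegree (Fin n) ℂ (N - l₀)) := by
  set V := restrictTotalDegree (Fin n) ℂ N with hV
  set W := restrictTotalDegree (Fin n) ℂ (N - l₀) with hW
  set q : P := homogeneousComponent l₀ lam with hq_def
  have hq : q.IsHomogeneous l₀ := homogeneousComponent_isHomogeneous l₀ lam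
  -- the two maps
  set T : ↥V →ₗ[ℂ] ↥W :=
    LinearMap.codRestrict W ((PD q) ∘ₗ V.subtype) (fun v => PD_mem hq hl v.2) with hT
  set S : ↥W →ₗ[ℂ] ↥V :=
    LinearMap.codRestrict V ((LinearMap.mulLeft ℂ q) ∘ₗ W.subtype)
      (fun w => mul_mem_RTD hq hl w.2) with hS
  have hSinj : Function.Injective S := by
    rw [← LinearMap.ker_eq_bot, eq_bot_iff]
    rintro w hw
    simp only [LinearMap.mem_ker, hS, LinearMap.codRestrict, LinearMap.comp_apply] at hw
    have hw' : q * (w : P) = 0 := congrArg Subtype.val hw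
    rcases mul_eq_zero.mp hw' with h | h
    · exact absurd h hl₀
    · simpa [Submodule.mem_bot] using Subtype.ext h
  -- duality maps
  set ΦV : ↥V →ₗ[ℂ] Module.Dual ℂ ↥V := (Bil.compl₂ V.subtype) ∘ₗ V.subtype with hΦV
  set ΦW : ↥W →ₗ[ℂ] Module.Dual ℂ ↥W := (Bil.compl₂ W.subtype) ∘ₗ W.subtype with hΦW
  have hΦinj : ∀ (M : ℕ) (v : ↥(restrictTotalDegree (Fin n) ℂ M)),
      ((Bil.compl₂ (restrictTotalDegree (Fin n) ℂ M).subtype) ∘ₗ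
        (restrictTotalDegree (Fin n) ℂ M).subtype) v = 0 → v = 0 := by
    intro M v hv
    by_contra hne
    have hv0 : (v : P) ≠ 0 := fun h => hne (Subtype.ext h)
    obtain ⟨α, hα⟩ := MvPolynomial.ne_zero_iff.mp hv0
    have hαd : α.degree ≤ M := by
      have := degree_le_of_mem_support (MvPolynomial.mem_support_iff.mpr hα)
      have hvM := (mem_restrictTotalDegree (Fin n) M (v : P)).mp v.2
      omega
    have hw := congrArg (fun f => f ⟨monomial α 1, mem_RTD_monomial hαd⟩) hv
    simp only [LinearMap.comp_apply, LinearMap.compl₂_apply, Submodule.coe_subtype,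
      LinearMap.zero_apply] at hw
    rw [Bil_apply_monomial] at hw
    have hfac : (∏ j, (((α j).factorial : ℂ))) ≠ 0 :=
      Finset.prod_ne_zero_iff.mpr fun j _ =>
        Nat.cast_ne_zero.mpr (Nat.factorial_ne_zero (α j))
    rw [mul_one] at hw
    exact hα ((mul_eq_zero.mp hw).resolve_right hfac)
  have hΦVinj : Function.Injective ΦV := by
    rw [← LinearMap.ker_eq_bot, eq_bot_iff]
    intro v hv
    simpa [Submodule.mem_bot] using hΦinj N v (by rw [LinearMap.mem_ker] at hv; exact hv)
  have hΦWinj : Function.Injective ΦW := by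
    rw [← LinearMap.ker_eq_bot, eq_bot_iff]
    intro v hv
    simpa [Submodule.mem_bot] using hΦinj (N - l₀) v (by rw [LinearMap.mem_ker] at hv; exact hv)
  have hΦVsurj : Function.Surjective ΦV :=
    (LinearMap.injective_iff_surjective_of_finrank_eq_finrank
      (Subspace.dual_finrank_eq).symm).mp hΦVinj
  -- the key adjoint identity
  have hcomp : ΦW ∘ₗ T = S.dualMap ∘ₗ ΦV := by
    refine LinearMap.ext fun v => LinearMap.ext fun w => ?_
    simp only [LinearMap.comp_apply, LinearMap.dualMap_apply, hΦW, hΦV,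
      LinearMap.compl₂_apply, Submodule.coe_subtype, hT, hS,
      LinearMap.codRestrict_apply]
    exact adjoint q (v : P) (w : P)
  -- rank computations
  have hkerT : finrank ℂ (LinearMap.ker (ΦW ∘ₗ T)) = finrank ℂ (LinearMap.ker T) := by
    rw [LinearMap.ker_comp_of_ker_eq_bot _ (LinearMap.ker_eq_bot.mpr hΦWinj)]
  have hrange : LinearMap.range (ΦW ∘ₗ T) = LinearMap.range S.dualMap := by
    rw [hcomp, LinearMap.range_comp_of_range_eq_top _ (LinearMap.range_eq_top.mpr hΦVsurj)]
  have hrank : finrank ℂ (LinearMap.range (ΦW ∘ₗ T)) = finrank ℂ W := by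
    rw [hrange, LinearMap.finrank_range_dualMap_eq_finrank_range,
      LinearMap.finrank_range_of_inj hSinj]
  have hrn := LinearMap.finrank_range_add_finrank_ker (ΦW ∘ₗ T)
  -- identify ker T with the submodule in the statement
  have hkerT' : LinearMap.ker T = (V ⊓ LinearMap.ker (QD q)).comap V.subtype := by
    rw [hT, LinearMap.ker_codRestrict, LinearMap.ker_comp, ker_QD_eq hq,
      Submodule.comap_inf, Submodule.comap_subtype_self, top_inf_eq]
  have e2 := Submodule.comapSubtypeEquivOfLe (inf_le_left : V ⊓ LinearMap.ker (QD q) ≤ V)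
  have hfin : finrank ℂ ↥(V ⊓ LinearMap.ker (QD q)) = finrank ℂ (LinearMap.ker T) := by
    rw [hkerT']
    exact e2.finrank_eq.symm
  rw [hfin]
  omega

end Aux11

namespace Aux12
open Aux6 Aux7 Aux9 Aux11 Module

variable {n : ℕ} {N l₀ : ℕ} {lam : MvPolynomial (Fin n) ℂ}
  {Λ : MvPolynomial (Fin n) ℂ →ₗ[ℂ] MvPolynomial (Fin n) ℂ}

local notation "P" => MvPolynomial (Fin n) ℂ

lemma lhs_dim2 (hl : N < l₀)
    (hmin : ∀ l < l₀, homogeneousComponent l lam = 0)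
    (hΛ : ∀ p : P, Λ p = ∑ l ∈ Finset.range (N + 1), homogeneousComponent l (lam * p)) :
    Module.finrank ℂ
      (↥(restrictTotalDegree (Fin n) ℂ N) ⧸
        (Submodule.map Λ (restrictTotalDegree (Fin n) ℂ N)).comap
          (restrictTotalDegree (Fin n) ℂ N).subtype)
    = finrank ℂ (restrictTotalDegree (Fin n) ℂ N) := by
  set V := restrictTotalDegree (Fin n) ℂ N
  have hz : ∀ p : P, Λ p = 0 := fun p =>
    Λ_zero hmin hΛ p (fun j hj => absurd hj (by omega))
  have hmap : Submodule.map Λ V = ⊥ := by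
    rw [eq_bot_iff]
    rintro - ⟨p, hp, rfl⟩
    simp [hz p]
  have hcomap : (Submodule.map Λ V).comap V.subtype = ⊥ := by
    rw [hmap, Submodule.comap_bot, Submodule.ker_subtype]
  have h3 := Submodule.finrank_quotient_add_finrank ((Submodule.map Λ V).comap V.subtype)
  rw [hcomap] at h3 ⊢
  rw [finrank_bot] at h3
  omega

lemma rhs_dim2 (hl : N < l₀) :
    finrank ℂ
      ↥(restrictTotalDegree (Fin n) ℂ N ⊓
        LinearMap.ker (QD (homogeneousComponent l₀ lam)))
    = finrank ℂ (restrictTotalDegree (Fin n) ℂ N) := by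
  set V := restrictTotalDegree (Fin n) ℂ N
  set q : P := homogeneousComponent l₀ lam with hq_def
  have hq : q.IsHomogeneous l₀ := homogeneousComponent_isHomogeneous l₀ lam
  have hle : V ≤ LinearMap.ker (QD q) := by
    intro p hp
    rw [LinearMap.mem_ker, QD_eq_smul_PD hq, LinearMap.smul_apply,
      PD_zero_of_lt hq hl hp, smul_zero]
  rw [inf_eq_left.mpr hle]

end Aux12

/-- Let `λ ≠ 0` be a polynomial in `n ≥ 1` complex variables whose lowest-degree nonzero
homogeneous component is `λ_{l₀}`. Let `Λ_N : 𝒫_N → 𝒫_N` (on the space `𝒫_N` of polynomials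
of total degree at most `N`) send `p` to the truncation of `λ * p` to degree at most `N`.
Then the codimension in `𝒫_N` of the range of `Λ_N` equals the dimension of the space of
`λ_{l₀}`-harmonic polynomials of degree at most `N`. -/
theorem codim_range_truncated_multiplication {n : ℕ} (hn : 1 ≤ n) (N : ℕ)
    (lam : MvPolynomial (Fin n) ℂ) (hlam : lam ≠ 0) (l₀ : ℕ)
    (hl₀ : homogeneousComponent l₀ lam ≠ 0)
    (hmin : ∀ l < l₀, homogeneousComponent l lam = 0)
    (Λ : MvPolynomial (Fin n) ℂ →ₗ[ℂ] MvPolynomial (Fin n) ℂ)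
    (hΛ : ∀ p : MvPolynomial (Fin n) ℂ,
      Λ p = ∑ l ∈ Finset.range (N + 1), homogeneousComponent l (lam * p)) :
    Module.finrank ℂ
      (↥(restrictTotalDegree (Fin n) ℂ N) ⧸
        (Submodule.map Λ (restrictTotalDegree (Fin n) ℂ N)).comap
          (restrictTotalDegree (Fin n) ℂ N).subtype) =
    Module.finrank ℂ
      ↥(restrictTotalDegree (Fin n) ℂ N ⊓
        LinearMap.ker (QD (homogeneousComponent l₀ lam))) := by
  by_cases hl : l₀ ≤ N
  · rw [Aux11.lhs_dim hl hl₀ hmin hΛ, Aux11.rhs_dim hl hl₀]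
  · rw [Aux12.lhs_dim2 (by omega) hmin hΛ, Aux12.rhs_dim2 (by omega)]
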